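/- Let K, B ⊂ ℝ² be convex bodies in general relative position (dim F(K,u) + dim F(B,u) ≤ 1 for all unit vectors u) with 0 ∈ int B. For x ∈ ℝ² \ K let p(K,B,x) ∈ bd K be the unique point such that x ∈ p(K,B,x) + d(K,B,x)·bd B (the B-projection of x onto K). Then the map p(K,B,·) : ℝ² \ K → bd K is Lipschitz continuous. -/

import Mathlib

open scoped Pointwise

noncomputable section

def suppSet {n : ℕ} (L : Set (EuclideanSpace ℝ (Fin n))) (u : EuclideanSpace ℝ (Fin n)) :
    Set (EuclideanSpace ℝ (Fin n)) :=
  {x ∈ L | ∀ y ∈ L, inner ℝ u y ≤ (inner ℝ u x : ℝ)}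

def adim {n : ℕ} (s : Set (EuclideanSpace ℝ (Fin n))) : ℕ :=
  Module.finrank ℝ (affineSpan ℝ s).direction

def bDist {n : ℕ} (K B : Set (EuclideanSpace ℝ (Fin n))) (x : EuclideanSpace ℝ (Fin n)) : ℝ :=
  sInf {r : ℝ | 0 ≤ r ∧ x ∈ K + r • B}

abbrev E2 := EuclideanSpace ℝ (Fin 2)

def Jm (v : E2) : E2 := WithLp.toLp 2 ![v 1, -(v 0)]

lemma inner_expand (v w : E2) : (inner ℝ v w : ℝ) = v 0 * w 0 + v 1 * w 1 := by
  simp [PiLp.inner_apply, Fin.sum_univ_two, RCLike.inner_apply, conj_trivial]; ring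

lemma Jm_apply0 (v : E2) : Jm v 0 = v 1 := rfl
lemma Jm_apply1 (v : E2) : Jm v 1 = -(v 0) := rfl

lemma norm_sq_expand (v : E2) : ‖v‖ ^ 2 = v 0 ^ 2 + v 1 ^ 2 := by
  rw [← real_inner_self_eq_norm_sq, inner_expand]; ring

lemma basis_decomp {u1 : E2} (hu1 : ‖u1‖ = 1) (u2 : E2) :
    u2 = (inner ℝ u1 u2 : ℝ) • u1 + (inner ℝ (Jm u1) u2 : ℝ) • Jm u1 := by
  have h : u1 0 ^ 2 + u1 1 ^ 2 = 1 := by rw [← norm_sq_expand, hu1]; norm_num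
  have h0 : ∀ i, (((inner ℝ u1 u2 : ℝ) • u1 + (inner ℝ (Jm u1) u2 : ℝ) • Jm u1) : E2) i
      = (inner ℝ u1 u2 : ℝ) * u1 i + (inner ℝ (Jm u1) u2 : ℝ) * Jm u1 i := fun i => rfl
  ext i
  fin_cases i
  · rw [h0]; simp only [Fin.zero_eta, inner_expand, Jm_apply0, Jm_apply1]
    linear_combination (-(u2 0)) * h
  · rw [h0]; simp only [Fin.mk_one, inner_expand, Jm_apply0, Jm_apply1]
    linear_combination (-(u2 1)) * h

lemma norm_Jm (v : E2) : ‖Jm v‖ = ‖v‖ := by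
  have : ‖Jm v‖ ^ 2 = ‖v‖ ^ 2 := by
    rw [norm_sq_expand, norm_sq_expand, Jm_apply0, Jm_apply1]; ring
  have h1 := norm_nonneg (Jm v); have h2 := norm_nonneg v
  nlinarith

lemma Jm_add (v w : E2) : Jm (v + w) = Jm v + Jm w := by
  ext i; fin_cases i <;> simp only [Fin.zero_eta, Fin.mk_one, Jm_apply0, Jm_apply1, PiLp.add_apply] <;> ring

lemma scal_ineq {a c p q : ℝ} (ha : 0 ≤ a) (hpq : p ^ 2 + q ^ 2 = 1) (hq : q ≠ 0)
    (hc : p * a ≤ |q| * c) :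
    (1 + p) * Real.sqrt (a ^ 2 + c ^ 2) ≤ (1 + p) * c + |q| * a := by
  have hq0 : 0 < |q| := abs_pos.2 hq
  have hq2 : |q| ^ 2 = q ^ 2 := sq_abs q
  have hp1 : p ≤ 1 := by nlinarith [sq_nonneg q]
  have hpm : -1 ≤ p := by nlinarith [sq_nonneg q]
  set β := a / |q| with hβ
  have hβ0 : 0 ≤ β := div_nonneg ha hq0.le
  set α := c - p * a / |q| with hα
  have hα0 : 0 ≤ α := by
    rw [hα, sub_nonneg, div_le_iff₀ hq0]
    linarith [hc]
  have hab : a = β * |q| := by rw [hβ]; field_simp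
  have hcb : c = α + β * p := by rw [hα, hβ]; field_simp; ring
  have hsq : Real.sqrt (a ^ 2 + c ^ 2) ≤ α + β := by
    have h2 : a ^ 2 + c ^ 2 ≤ (α + β) ^ 2 := by
      rw [hab, hcb]
      nlinarith [mul_nonneg (mul_nonneg hα0 hβ0) (sub_nonneg.2 hp1), hq2, hpq, sq_nonneg β]
    calc Real.sqrt (a ^ 2 + c ^ 2) ≤ Real.sqrt ((α + β) ^ 2) := Real.sqrt_le_sqrt h2
    _ = α + β := Real.sqrt_sq (by linarith)
  have hid : (1 + p) * c + |q| * a = (1 + p) * (α + β) := by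
    rw [hab, hcb]; linear_combination β * hq2 + β * hpq
  rw [hid]
  exact mul_le_mul_of_nonneg_left hsq (by linarith)

lemma sub_ineq {u1 u2 : E2} (hu1 : ‖u1‖ = 1) (hu2 : ‖u2‖ = 1)
    (hq : (inner ℝ (Jm u1) u2 : ℝ) ≠ 0) {ε : ℝ}
    (hε : ε = if 0 < (inner ℝ (Jm u1) u2 : ℝ) then -1 else 1)
    {v : E2} (h1 : 0 ≤ (inner ℝ u1 v : ℝ)) (h2 : (inner ℝ u2 v : ℝ) ≤ 0) :
    (1 + (inner ℝ u1 u2 : ℝ)) * ‖v‖ ≤ (inner ℝ (ε • Jm (u1 + u2)) v : ℝ) := by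
  have hS : u1 0 ^ 2 + u1 1 ^ 2 = 1 := by rw [← norm_sq_expand, hu1]; norm_num
  set p : ℝ := inner ℝ u1 u2 with hp
  set q : ℝ := inner ℝ (Jm u1) u2 with hqd
  set a : ℝ := inner ℝ u1 v with hadef
  set c1 : ℝ := inner ℝ (Jm u1) v with hc1
  have hpq : p ^ 2 + q ^ 2 = 1 := by
    have h2' : ‖u2‖ ^ 2 = u2 0 ^ 2 + u2 1 ^ 2 := norm_sq_expand u2
    rw [hu2] at h2'
    simp only [hp, hqd, inner_expand, Jm_apply0, Jm_apply1]
    linear_combination (u2 0 ^ 2 + u2 1 ^ 2) * hS - h2'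
  have hkey : a ^ 2 + c1 ^ 2 = ‖v‖ ^ 2 := by
    rw [norm_sq_expand]
    simp only [hadef, hc1, inner_expand, Jm_apply0, Jm_apply1]
    linear_combination (v 0 ^ 2 + v 1 ^ 2) * hS
  have hu2v : (inner ℝ u2 v : ℝ) = p * a + q * c1 := by
    simp only [hp, hqd, hadef, hc1, inner_expand, Jm_apply0, Jm_apply1]
    linear_combination (-(u2 0 * v 0 + u2 1 * v 1)) * hS
  have hJv : (inner ℝ (Jm (u1 + u2)) v : ℝ) = (1 + p) * c1 - q * a := by
    simp only [hp, hqd, hadef, hc1, inner_expand, Jm_apply0, Jm_apply1, PiLp.add_apply]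
    linear_combination (-(u2 1 * v 0 - u2 0 * v 1)) * hS
  have hεq : -(ε * q) = |q| := by
    rcases lt_trichotomy q 0 with h | h | h
    · rw [hε, if_neg (by linarith), abs_of_neg h]; ring
    · exact absurd h hq
    · rw [hε, if_pos h, abs_of_pos h]; ring
  have hε2 : ε ^ 2 = 1 := by
    rcases lt_or_ge 0 q with h | h
    · rw [hε, if_pos h]; norm_num
    · rw [hε, if_neg (not_lt.2 h)]; norm_num
  set c : ℝ := ε * c1 with hcdef
  have hconstr : p * a ≤ |q| * c := by
    have : p * a + q * c1 ≤ 0 := by rw [← hu2v]; exact h2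
    have h3 : |q| * c = -(q * c1) := by
      rw [hcdef, ← hεq]; linear_combination (-(q * c1)) * hε2
    linarith [h3, this]
  have hmain := scal_ineq h1 hpq hq hconstr
  have hcc : c ^ 2 = c1 ^ 2 := by rw [hcdef]; linear_combination (c1 ^ 2) * hε2
  have hnv : ‖v‖ = Real.sqrt (a ^ 2 + c ^ 2) := by
    rw [hcc, hkey, Real.sqrt_sq (norm_nonneg v)]
  have hfin : (inner ℝ (ε • Jm (u1 + u2)) v : ℝ) = (1 + p) * c + |q| * a := by
    rw [real_inner_smul_left, hJv, hcdef, ← hεq]; ring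
  rw [hfin, hnv]
  exact hmain

lemma step5 {u1 u2 Q β : E2} (hu1 : ‖u1‖ = 1) (hu2 : ‖u2‖ = 1) (hne : u1 ≠ u2)
    {r : ℝ} (hr : 0 ≤ r)
    (hQ1 : 0 ≤ (inner ℝ u1 Q : ℝ)) (hQ2 : (inner ℝ u2 Q : ℝ) ≤ 0)
    (hβ1 : 0 ≤ (inner ℝ u1 β : ℝ)) (hβ2 : (inner ℝ u2 β : ℝ) ≤ 0) :
    ‖u1 + u2‖ * ‖Q‖ ≤ 2 * ‖Q + r • β‖ := by
  by_cases hq : (inner ℝ (Jm u1) u2 : ℝ) = 0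
  · -- degenerate : u2 = ± u1
    have hdec := basis_decomp hu1 u2
    rw [hq] at hdec
    simp only [zero_smul, add_zero] at hdec
    have hp2 : (inner ℝ u1 u2 : ℝ) ^ 2 = 1 := by
      have h : ‖(inner ℝ u1 u2 : ℝ) • u1‖ = 1 := by rw [← hdec]; exact hu2
      rw [norm_smul, hu1, mul_one, Real.norm_eq_abs] at h
      nlinarith [sq_abs (inner ℝ u1 u2 : ℝ), h]
    have hfac : ((inner ℝ u1 u2 : ℝ) - 1) * ((inner ℝ u1 u2 : ℝ) + 1) = 0 := by
      linear_combination hp2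
    rcases mul_eq_zero.mp hfac with h | h
    · exfalso
      apply hne
      have : (inner ℝ u1 u2 : ℝ) = 1 := by linarith
      rw [this, one_smul] at hdec
      exact hdec.symm
    · have : (inner ℝ u1 u2 : ℝ) = -1 := by linarith
      rw [this] at hdec
      have hzero : u1 + u2 = 0 := by rw [hdec]; simp
      rw [hzero, norm_zero, zero_mul]
      positivity
  · set p : ℝ := inner ℝ u1 u2 with hp
    set ε : ℝ := if 0 < (inner ℝ (Jm u1) u2 : ℝ) then -1 else 1 with hε
    set e : E2 := ε • Jm (u1 + u2) with he
    have h1 := sub_ineq hu1 hu2 hq hε hQ1 hQ2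
    have h2 := sub_ineq hu1 hu2 hq hε hβ1 hβ2
    have hs2 : ‖u1 + u2‖ ^ 2 = 2 * (1 + p) := by
      rw [norm_add_sq_real, hu1, hu2, hp]; ring
    have hpge : 0 ≤ 1 + p := by nlinarith [sq_nonneg ‖u1 + u2‖, hs2]
    have henorm : ‖e‖ = ‖u1 + u2‖ := by
      rw [he, norm_smul, norm_Jm]
      have : |ε| = 1 := by
        rcases lt_or_ge 0 (inner ℝ (Jm u1) u2 : ℝ) with h | h
        · rw [hε, if_pos h]; norm_num
        · rw [hε, if_neg (not_lt.2 h)]; norm_num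
      rw [Real.norm_eq_abs, this, one_mul]
    have hinner : (inner ℝ e (Q + r • β) : ℝ) = (inner ℝ e Q : ℝ) + r * (inner ℝ e β : ℝ) := by
      rw [inner_add_right, real_inner_smul_right]
    have hCS : (inner ℝ e (Q + r • β) : ℝ) ≤ ‖e‖ * ‖Q + r • β‖ := real_inner_le_norm _ _
    have hchain : (1 + p) * ‖Q‖ ≤ ‖u1 + u2‖ * ‖Q + r • β‖ := by
      have hβpos : 0 ≤ (inner ℝ e β : ℝ) := le_trans (by positivity) h2
      calc (1 + p) * ‖Q‖ ≤ (inner ℝ e Q : ℝ) := h1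
      _ ≤ (inner ℝ e Q : ℝ) + r * (inner ℝ e β : ℝ) := by nlinarith [mul_nonneg hr hβpos]
      _ = (inner ℝ e (Q + r • β) : ℝ) := hinner.symm
      _ ≤ ‖e‖ * ‖Q + r • β‖ := hCS
      _ = ‖u1 + u2‖ * ‖Q + r • β‖ := by rw [henorm]
    rcases eq_or_lt_of_le (norm_nonneg (u1 + u2)) with hs0 | hs0
    · rw [← hs0, zero_mul]; positivity
    · have hppos : 0 < 1 + p := by nlinarith [hs2, hs0]
      nlinarith [mul_le_mul_of_nonneg_left hchain (le_of_lt hs0), hs2,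
        mul_nonneg (norm_nonneg (Q + r • β)) hpge, norm_nonneg Q]

section DistLemmas

variable {K B : Set E2} {k₀ : E2} {ρB : ℝ}

lemma mem_KrB {k b x : E2} {r : ℝ} (hk : k ∈ K) (hb : b ∈ B) (hx : x = k + r • b) :
    x ∈ K + r • B := by
  rw [hx]; exact Set.add_mem_add hk (Set.smul_mem_smul_set hb)

lemma mem_smul_of_norm (hρ : 0 < ρB) (hball : Metric.closedBall 0 ρB ⊆ B) (v : E2) :
    v ∈ (‖v‖ / ρB) • B := by
  by_cases hv : v = 0
  · subst hv
    refine ⟨0, hball (by simp [hρ.le]), by simp⟩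
  · have hn : (0:ℝ) < ‖v‖ := norm_pos_iff.2 hv
    refine ⟨(ρB / ‖v‖) • v, hball ?_, ?_⟩
    · simp only [Metric.mem_closedBall, dist_zero_right, norm_smul, Real.norm_eq_abs]
      rw [abs_of_pos (by positivity)]
      rw [div_mul_cancel₀ _ (ne_of_gt hn)]
    · show (‖v‖ / ρB) • (ρB / ‖v‖) • v = v
      rw [smul_smul]
      have h1 : ‖v‖ / ρB * (ρB / ‖v‖) = 1 := by field_simp
      rw [h1, one_smul]

lemma S_nonempty (hk₀ : k₀ ∈ K) (hρ : 0 < ρB) (hball : Metric.closedBall 0 ρB ⊆ B) (x : E2) :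
    ∃ r : ℝ, 0 ≤ r ∧ x ∈ K + r • B := by
  refine ⟨‖x - k₀‖ / ρB, by positivity, ?_⟩
  have := mem_smul_of_norm hρ hball (x - k₀)
  obtain ⟨b, hb, hbe⟩ := this
  have hbe' : (‖x - k₀‖ / ρB) • b = x - k₀ := hbe
  exact mem_KrB hk₀ hb (by rw [hbe']; abel)

end DistLemmas

section DistLemmas2

variable {K B : Set E2} {k₀ : E2} {ρB : ℝ}

lemma bDist_le (hne : ∃ r : ℝ, 0 ≤ r ∧ True) {x : E2} {r : ℝ}
    (hr : 0 ≤ r) (hx : x ∈ K + r • B) : bDist K B x ≤ r :=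
  csInf_le ⟨0, fun _ h => h.1⟩ ⟨hr, hx⟩

lemma le_bDist (hk₀ : k₀ ∈ K) (hρ : 0 < ρB) (hball : Metric.closedBall 0 ρB ⊆ B) {x : E2} {t : ℝ}
    (h : ∀ r : ℝ, 0 ≤ r → x ∈ K + r • B → t ≤ r) : t ≤ bDist K B x := by
  obtain ⟨r, hr0, hrm⟩ := S_nonempty hk₀ hρ hball x
  exact le_csInf ⟨r, hr0, hrm⟩ (fun b hb => h b hb.1 hb.2)

lemma bDist_nonneg (hk₀ : k₀ ∈ K) (hρ : 0 < ρB) (hball : Metric.closedBall 0 ρB ⊆ B) (x : E2) :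
    0 ≤ bDist K B x :=
  le_bDist hk₀ hρ hball (fun r hr _ => hr)

lemma bDist_lip (hBconv : Convex ℝ B) (hk₀ : k₀ ∈ K) (hρ : 0 < ρB)
    (hball : Metric.closedBall 0 ρB ⊆ B) (x y : E2) :
    bDist K B x ≤ bDist K B y + ‖x - y‖ / ρB := by
  obtain ⟨r0, hr00, hr0m⟩ := S_nonempty hk₀ hρ hball y
  have key : ∀ r : ℝ, 0 ≤ r → y ∈ K + r • B → bDist K B x ≤ r + ‖x - y‖ / ρB := by
    intro r hr hy
    obtain ⟨k, hk, w, hw, hkw⟩ := hy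
    obtain ⟨b, hb, hbw⟩ := hw
    have hbw' : r • b = w := hbw
    have hxy := mem_smul_of_norm hρ hball (x - y)
    have hkw' : k + w = y := hkw
    have hsum : x ∈ K + (r + ‖x - y‖ / ρB) • B := by
      rw [hBconv.add_smul hr (by positivity)]
      have heq : x = k + (r • b + (x - y)) := by
        rw [hbw', ← hkw']; abel
      have h1 : r • b ∈ r • B := Set.smul_mem_smul_set hb
      have hm := Set.add_mem_add hk (Set.add_mem_add h1 hxy)
      rw [← heq] at hm
      exact hm
    exact bDist_le ⟨0, le_refl 0, trivial⟩ (by positivity) hsum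
  have : bDist K B x - ‖x - y‖ / ρB ≤ bDist K B y := by
    refine le_csInf ⟨r0, hr00, hr0m⟩ (fun b hb => ?_)
    have := key b hb.1 hb.2
    linarith
  linarith

lemma bDist_pos {RB : ℝ} (hKc : IsCompact K) (hk₀ : k₀ ∈ K) (hρ : 0 < ρB)
    (hball : Metric.closedBall 0 ρB ⊆ B) (hRB : 0 < RB) (hBR : B ⊆ Metric.closedBall 0 RB)
    {x : E2} (hx : x ∉ K) : 0 < bDist K B x := by
  have hKclosed : IsClosed K := hKc.isClosed
  have hδ : 0 < Metric.infDist x K := by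
    rw [← hKclosed.notMem_iff_infDist_pos ⟨k₀, hk₀⟩]; exact hx
  have : Metric.infDist x K / RB ≤ bDist K B x := by
    refine le_bDist hk₀ hρ hball (fun r hr hm => ?_)
    obtain ⟨k, hk, w, hw, hkw⟩ := hm
    obtain ⟨b, hb, hbw⟩ := hw
    have hbw' : r • b = w := hbw
    have h1 : Metric.infDist x K ≤ ‖x - k‖ := by
      rw [← dist_eq_norm]; exact Metric.infDist_le_dist_of_mem hk
    have hkw' : k + w = x := hkw
    have h2 : ‖x - k‖ = ‖r • b‖ := by rw [hbw', ← hkw']; congr 1; abel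
    have h3 : ‖r • b‖ ≤ r * RB := by
      rw [norm_smul, Real.norm_eq_abs, abs_of_nonneg hr]
      have := hBR hb
      simp only [Metric.mem_closedBall, dist_zero_right] at this
      exact mul_le_mul_of_nonneg_left this hr
    rw [div_le_iff₀ hRB]
    nlinarith
  calc (0:ℝ) < Metric.infDist x K / RB := by positivity
  _ ≤ _ := this

lemma ray_dist {RB : ℝ} (hKc : IsCompact K) (hKconv : Convex ℝ K) (hBconv : Convex ℝ B)
    (hk₀ : k₀ ∈ K) (hρ : 0 < ρB) (hball : Metric.closedBall 0 ρB ⊆ B)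
    (hRB : 0 < RB) (hBR : B ⊆ Metric.closedBall 0 RB)
    {y q b : E2} (hy : y ∉ K) (hq : q ∈ K) (hb : b ∈ B)
    (hyd : y = q + bDist K B y • b) {t : ℝ} (ht : 0 < t) :
    bDist K B (q + t • b) = t := by
  set dy := bDist K B y with hdy
  have hdy0 : 0 < dy := bDist_pos hKc hk₀ hρ hball hRB hBR hy
  refine le_antisymm (bDist_le ⟨0, le_refl 0, trivial⟩ ht.le (mem_KrB hq hb rfl)) ?_
  refine le_bDist hk₀ hρ hball (fun s hs hm => ?_)
  by_contra hst
  push_neg at hst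
  obtain ⟨k, hk, w, hw, hkw⟩ := hm
  obtain ⟨b', hb', hbw⟩ := hw
  have hbw' : s • b' = w := hbw
  have hkw' : k + w = q + t • b := hkw
  have hkk : k = q + t • b - s • b' := by rw [hbw', ← hkw']; abel
  rcases le_or_gt t dy with hcase | hcase
  · -- t ≤ dy : y = (k + s•b') + (dy - t)•b ∈ K + (s + (dy - t))•B
    have hyeq : y = k + (s • b' + (dy - t) • b) := by
      rw [hyd, hkk]; module
    have hmem : y ∈ K + (s + (dy - t)) • B := by
      rw [hBconv.add_smul hs (by linarith)]
      have h1 : s • b' ∈ s • B := Set.smul_mem_smul_set hb'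
      have h2 : (dy - t) • b ∈ (dy - t) • B := Set.smul_mem_smul_set hb
      have hm2 := Set.add_mem_add hk (Set.add_mem_add h1 h2)
      rw [← hyeq] at hm2
      exact hm2
    have := bDist_le (K := K) (B := B) ⟨0, le_refl 0, trivial⟩ (by linarith) hmem
    rw [← hdy] at this
    linarith
  · -- dy < t : y = (l•k + (1-l)•q) + (l*s)•b'
    set l := dy / t with hl
    have hl0 : 0 < l := by positivity
    have hl1 : l < 1 := by rw [hl, div_lt_one ht]; exact hcase
    have hlt : l * t = dy := by rw [hl]; field_simp
    have hyeq : y = (l • k + (1 - l) • q) + (l * s) • b' := by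
      rw [hyd, ← hlt, hkk]; module
    have hmem : y ∈ K + (l * s) • B := by
      rw [hyeq]
      exact Set.add_mem_add (hKconv hk hq hl0.le (by linarith) (by ring))
        (Set.smul_mem_smul_set hb')
    have := bDist_le (K := K) (B := B) ⟨0, le_refl 0, trivial⟩ (mul_nonneg hl0.le hs) hmem
    rw [← hdy] at this
    nlinarith

lemma support_exists (hKconv : Convex ℝ K) (hBconv : Convex ℝ B)
    (hk₀i : k₀ ∈ interior K) (h0B : (0:E2) ∈ B)
    {z q b : E2} {t : ℝ} (ht : 0 < t) (hq : q ∈ K) (hb : b ∈ B)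
    (hz : z = q + t • b) (hdz : bDist K B z = t) :
    ∃ u : E2, ‖u‖ = 1 ∧ (∀ k ∈ K, (inner ℝ u k : ℝ) ≤ inner ℝ u q) ∧
      (∀ b' ∈ B, (inner ℝ u b' : ℝ) ≤ inner ℝ u b) ∧
      (∀ w ∈ K + t • B, (inner ℝ u w : ℝ) ≤ inner ℝ u z) := by
  set C := K + t • B with hC
  have hCconv : Convex ℝ C := hKconv.add (hBconv.smul t)
  have hKC : K ⊆ C := by
    intro k hk
    have : k = k + t • (0:E2) := by simp
    exact mem_KrB hk h0B this
  have hk₀C : k₀ ∈ interior C := interior_mono hKC hk₀i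
  have hk₀K : k₀ ∈ K := interior_subset hk₀i
  have hzmem : z ∈ C := mem_KrB hq hb hz
  -- z is not in the interior of C
  have hzint : z ∉ interior C := by
    intro hzi
    have hzk : z ≠ k₀ := by
      rintro rfl
      have h0 : z ∈ K + (0:ℝ) • B := by
        rw [Set.zero_smul_set ⟨0, h0B⟩]
        exact ⟨z, hk₀K, 0, rfl, add_zero z⟩
      have := bDist_le (K := K) (B := B) ⟨0, le_refl 0, trivial⟩ (le_refl 0) h0
      rw [hdz] at this; linarith
    obtain ⟨δ, hδ0, hδball⟩ := Metric.mem_nhds_iff.mp (mem_interior_iff_mem_nhds.mp hzi)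
    set ε := δ / (2 * ‖z - k₀‖) with hε
    have hzknorm : 0 < ‖z - k₀‖ := by
      rw [norm_pos_iff, sub_ne_zero]; exact hzk
    have hε0 : 0 < ε := by positivity
    have hz' : z + ε • (z - k₀) ∈ C := by
      apply hδball
      simp only [Metric.mem_ball, dist_self_add_left, norm_smul, Real.norm_eq_abs,
        abs_of_pos hε0]
      have hne' : ‖z - k₀‖ ≠ 0 := ne_of_gt hzknorm
      calc ε * ‖z - k₀‖ = δ / 2 := by rw [hε]; field_simp
      _ < δ := by linarith
    obtain ⟨k, hk, w, hw, hkw⟩ := hz'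
    obtain ⟨b'', hb'', hbw⟩ := hw
    have hbw' : t • b'' = w := hbw
    have hkw' : k + w = z + ε • (z - k₀) := hkw
    have hne : (1:ℝ) + ε ≠ 0 := by positivity
    have hk2 : k = (1+ε) • z - t • b'' - ε • k₀ := by
      rw [← hbw'] at hkw'
      have hstep : k = (z + ε • (z - k₀)) - t • b'' := by rw [← hkw']; abel
      rw [hstep]; module
    have hzeq : z = ((1+ε)⁻¹ • k + (ε/(1+ε)) • k₀) + ((1+ε)⁻¹ * t) • b'' := by
      rw [hk2]; match_scalars <;> field_simp <;> ring
    have hmem : z ∈ K + ((1+ε)⁻¹ * t) • B := by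
      rw [hzeq]
      exact Set.add_mem_add
        (hKconv hk hk₀K (by positivity) (by positivity) (by field_simp))
        (Set.smul_mem_smul_set hb'')
    have hle := bDist_le (K := K) (B := B) ⟨0, le_refl 0, trivial⟩ (by positivity) hmem
    rw [hdz] at hle
    have h5 : (1+ε) * t ≤ (1+ε) * ((1+ε)⁻¹ * t) :=
      mul_le_mul_of_nonneg_left hle (by positivity)
    rw [← mul_assoc, mul_inv_cancel₀ hne, one_mul] at h5
    nlinarith [mul_pos hε0 ht]
  -- Hahn–Banach separation
  obtain ⟨f, c', hfs, hft⟩ := geometric_hahn_banach_open (hCconv.interior) isOpen_interior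
      (convex_singleton z) (Set.disjoint_singleton_right.2 hzint)
  have hfz : c' ≤ f z := hft z rfl
  have hfC : ∀ w ∈ C, f w ≤ f z := by
    intro w hw
    have key : ∀ θ : ℝ, θ ∈ Set.Ioc (0:ℝ) 1 → f w + θ * (f k₀ - f w) ≤ f z := by
      intro θ hθ
      have hint : w + θ • (k₀ - w) ∈ interior C := hCconv.add_smul_sub_mem_interior hw hk₀C hθ
      have hlt := (hfs _ hint).le.trans hfz
      have hfeq : f (w + θ • (k₀ - w)) = f w + θ * (f k₀ - f w) := by
        rw [map_add, map_smul, map_sub]; simp only [smul_eq_mul]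
      rw [hfeq] at hlt; exact hlt
    have htends : Filter.Tendsto (fun θ : ℝ => f w + θ * (f k₀ - f w))
        (nhdsWithin 0 (Set.Ioi 0)) (nhds (f w)) := by
      have hcont : Filter.Tendsto (fun θ : ℝ => f w + θ * (f k₀ - f w)) (nhds 0)
          (nhds (f w + 0 * (f k₀ - f w))) :=
        (continuous_const.add (continuous_id.mul continuous_const)).tendsto 0
      simpa using hcont.mono_left nhdsWithin_le_nhds
    exact le_of_tendsto htends (Filter.eventually_of_mem
      (Ioc_mem_nhdsGT_of_mem ⟨le_refl 0, zero_lt_one⟩) key)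
  -- Riesz representation
  set v := (InnerProductSpace.toDual ℝ E2).symm f with hv
  have hvx : ∀ x : E2, (inner ℝ v x : ℝ) = f x := fun x => InnerProductSpace.toDual_symm_apply
  have hkz : f k₀ < f z := lt_of_lt_of_le (hfs k₀ hk₀C) hfz
  have hvne : v ≠ 0 := by
    intro h0
    have h1 := hvx k₀
    have h2 := hvx z
    rw [h0] at h1 h2
    simp only [inner_zero_left] at h1 h2
    rw [← h1, ← h2] at hkz
    exact lt_irrefl 0 hkz
  have hnv : 0 < ‖v‖ := norm_pos_iff.2 hvne
  have hCsupp : ∀ w ∈ C, (inner ℝ (‖v‖⁻¹ • v) w : ℝ) ≤ inner ℝ (‖v‖⁻¹ • v) z := by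
    intro w hw
    rw [real_inner_smul_left, real_inner_smul_left, hvx, hvx]
    exact mul_le_mul_of_nonneg_left (hfC w hw) (by positivity)
  refine ⟨‖v‖⁻¹ • v, norm_smul_inv_norm hvne, ?_, ?_, hCsupp⟩
  · intro k hk
    have h1 := hCsupp (k + t • b) (mem_KrB hk hb rfl)
    rw [hz] at h1
    rw [inner_add_right, inner_add_right] at h1
    linarith
  · intro b' hb'
    have h1 := hCsupp (q + t • b') (mem_KrB hq hb' rfl)
    rw [hz] at h1
    rw [inner_add_right, inner_add_right, real_inner_smul_right, real_inner_smul_right] at h1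
    have h2 : t * (inner ℝ (‖v‖⁻¹ • v) b' : ℝ) ≤ t * inner ℝ (‖v‖⁻¹ • v) b := by linarith
    exact le_of_mul_le_mul_left h2 ht

end DistLemmas2

lemma adim_eq_zero_imp {s : Set E2} (h : adim s = 0) {x y : E2}
    (hx : x ∈ s) (hy : y ∈ s) : x = y := by
  have hdir : (affineSpan ℝ s).direction = ⊥ := Submodule.finrank_eq_zero.mp h
  have hmem : x -ᵥ y ∈ (affineSpan ℝ s).direction :=
    AffineSubspace.vsub_mem_direction (subset_affineSpan ℝ s hx) (subset_affineSpan ℝ s hy)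
  rw [hdir, Submodule.mem_bot] at hmem
  have : x - y = 0 := hmem
  rw [sub_eq_zero] at this; exact this

lemma one_le_adim {s : Set E2} {x y : E2} (hx : x ∈ s) (hy : y ∈ s) (hxy : x ≠ y) :
    1 ≤ adim s := by
  by_contra h
  push_neg at h
  interval_cases h' : adim s
  · exact hxy (adim_eq_zero_imp h' hx hy)

lemma caseB {C : Set E2} {u1 u2 z1 z2 c : E2} {ι M : ℝ}
    (hu1 : ‖u1‖ = 1) (hu2 : ‖u2‖ = 1)
    (hz1C : z1 ∈ C) (hz2C : z2 ∈ C)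
    (hsupp1 : ∀ w ∈ C, (inner ℝ u1 w : ℝ) ≤ inner ℝ u1 z1)
    (hsupp2 : ∀ w ∈ C, (inner ℝ u2 w : ℝ) ≤ inner ℝ u2 z2)
    (hball : Metric.closedBall c ι ⊆ C) (hι : 0 < ι)
    (hM : ‖z2‖ ≤ M) (hcM : ‖c‖ + M ≥ 0)
    (hsmall : ‖u1 + u2‖ * (‖c‖ + M) ≤ ι) :
    ι ≤ 2 * ‖z1 - z2‖ := by
  have hb1 : c + ι • u1 ∈ C := by
    apply hball
    simp [Metric.mem_closedBall, dist_self_add_left, norm_smul, Real.norm_eq_abs,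
      abs_of_pos hι, hu1]
  have hb2 : c + ι • u2 ∈ C := by
    apply hball
    simp [Metric.mem_closedBall, dist_self_add_left, norm_smul, Real.norm_eq_abs,
      abs_of_pos hι, hu2]
  have h1 := hsupp1 _ hb1
  have h2 := hsupp2 _ hb2
  rw [inner_add_right, real_inner_smul_right, real_inner_self_eq_norm_sq, hu1] at h1
  rw [inner_add_right, real_inner_smul_right, real_inner_self_eq_norm_sq, hu2] at h2
  have h3 := hsupp2 _ hz1C
  -- Cauchy-Schwarz bound on ⟪u1+u2, z2 - c⟫
  have hCS : (inner ℝ (u1 + u2) (z2 - c) : ℝ) ≤ ‖u1 + u2‖ * (‖c‖ + M) := by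
    calc (inner ℝ (u1 + u2) (z2 - c) : ℝ) ≤ ‖u1 + u2‖ * ‖z2 - c‖ := real_inner_le_norm _ _
    _ ≤ ‖u1 + u2‖ * (‖c‖ + M) := by
        have : ‖z2 - c‖ ≤ ‖z2‖ + ‖c‖ := norm_sub_le _ _
        have hn : (0:ℝ) ≤ ‖u1 + u2‖ := norm_nonneg _
        nlinarith
  -- main chain
  have hA : ι ≤ (inner ℝ u1 (z1 - z2) : ℝ) + (inner ℝ u2 (z2 - z1) : ℝ) := by
    have e1 : (inner ℝ u1 (z1 - z2) : ℝ) = inner ℝ u1 z1 - inner ℝ u1 z2 := by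
      rw [inner_sub_right]
    have e2 : (inner ℝ u2 (z2 - z1) : ℝ) = inner ℝ u2 z2 - inner ℝ u2 z1 := by
      rw [inner_sub_right]
    have e3 : (inner ℝ (u1 + u2) (z2 - c) : ℝ)
        = inner ℝ u1 z2 - inner ℝ u1 c + (inner ℝ u2 z2 - inner ℝ u2 c) := by
      rw [inner_add_left, inner_sub_right, inner_sub_right]; try ring
    have h3' : (inner ℝ u2 z1 : ℝ) ≤ inner ℝ u2 z2 := h3
    -- ι + ι + ⟪u1+u2, z2-c⟫ ≥ ... combine
    have c1 : (inner ℝ u1 c : ℝ) + ι ≤ inner ℝ u1 z1 := by linarith [h1]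
    have c2 : (inner ℝ u2 c : ℝ) + ι ≤ inner ℝ u2 z2 := by linarith [h2]
    linarith [hCS, hsmall]
  have hB : (inner ℝ u1 (z1 - z2) : ℝ) + (inner ℝ u2 (z2 - z1) : ℝ) ≤ 2 * ‖z1 - z2‖ := by
    have d1 : (inner ℝ u1 (z1 - z2) : ℝ) ≤ ‖z1 - z2‖ := by
      calc (inner ℝ u1 (z1 - z2) : ℝ) ≤ ‖u1‖ * ‖z1 - z2‖ := real_inner_le_norm _ _
      _ = ‖z1 - z2‖ := by rw [hu1, one_mul]
    have d2 : (inner ℝ u2 (z2 - z1) : ℝ) ≤ ‖z1 - z2‖ := by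
      calc (inner ℝ u2 (z2 - z1) : ℝ) ≤ ‖u2‖ * ‖z2 - z1‖ := real_inner_le_norm _ _
      _ = ‖z1 - z2‖ := by rw [hu2, one_mul, norm_sub_rev]
    linarith
  linarith


set_option maxHeartbeats 1000000 in
theorem bProjection_lipschitz (K B : Set (EuclideanSpace ℝ (Fin 2)))
    (hKc : IsCompact K) (hKconv : Convex ℝ K) (hKint : (interior K).Nonempty)
    (hBc : IsCompact B) (hBconv : Convex ℝ B) (hB0 : (0 : EuclideanSpace ℝ (Fin 2)) ∈ interior B)
    (hgrp : ∀ u : EuclideanSpace ℝ (Fin 2), ‖u‖ = 1 → adim (suppSet K u) + adim (suppSet B u) ≤ 1)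
    (p : EuclideanSpace ℝ (Fin 2) → EuclideanSpace ℝ (Fin 2))
    (hp : ∀ x ∉ K, p x ∈ frontier K ∧ ∃ b ∈ frontier B, x = p x + bDist K B x • b) :
    ∃ C : ℝ, ∀ x ∉ K, ∀ y ∉ K, ‖p x - p y‖ ≤ C * ‖x - y‖ := by
  classical
  obtain ⟨k₀, hk₀i⟩ := hKint
  obtain ⟨ρK, hρK0, hρKball⟩ : ∃ ρK > 0, Metric.closedBall k₀ ρK ⊆ K := by
    obtain ⟨ρ, hρ0, hball⟩ := Metric.nhds_basis_closedBall.mem_iff.mp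
      (mem_interior_iff_mem_nhds.mp hk₀i)
    exact ⟨ρ, hρ0, hball⟩
  obtain ⟨ρB, hρB0, hρBball⟩ : ∃ ρB > 0, Metric.closedBall 0 ρB ⊆ B := by
    obtain ⟨ρ, hρ0, hball⟩ := Metric.nhds_basis_closedBall.mem_iff.mp
      (mem_interior_iff_mem_nhds.mp hB0)
    exact ⟨ρ, hρ0, hball⟩
  obtain ⟨RK', hRK'⟩ := hKc.isBounded.subset_closedBall 0
  obtain ⟨RB', hRB'⟩ := hBc.isBounded.subset_closedBall 0
  set RK := max RK' 1 with hRK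
  set RB := max RB' 1 with hRB
  have hRK0 : (0:ℝ) < RK := lt_of_lt_of_le one_pos (le_max_right _ _)
  have hRB0 : (0:ℝ) < RB := lt_of_lt_of_le one_pos (le_max_right _ _)
  have hKR : K ⊆ Metric.closedBall 0 RK :=
    hRK'.trans (Metric.closedBall_subset_closedBall (le_max_left _ _))
  have hBR : B ⊆ Metric.closedBall 0 RB :=
    hRB'.trans (Metric.closedBall_subset_closedBall (le_max_left _ _))
  have hk₀K : k₀ ∈ K := interior_subset hk₀i
  have h0B : (0:E2) ∈ B := hρBball (by simp [hρB0.le])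
  have hKclosed : IsClosed K := hKc.isClosed
  have hBclosed : IsClosed B := hBc.isClosed
  have hk₀norm : ‖k₀‖ ≤ RK := by
    have := hKR hk₀K; simpa [Metric.mem_closedBall, dist_zero_right] using this
  -- basic size facts
  have hρKRK : ρK ≤ 2 * RK := by
    set e0 : E2 := EuclideanSpace.single 0 (1:ℝ)
    have he0 : ‖e0‖ = 1 := by simp [e0, EuclideanSpace.norm_single]
    have hm : k₀ + ρK • e0 ∈ K := hρKball (by
      simp [Metric.mem_closedBall, dist_self_add_left, norm_smul, Real.norm_eq_abs,
        abs_of_pos hρK0, he0])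
    have h1 := hKR hm
    simp only [Metric.mem_closedBall, dist_zero_right] at h1
    have h2 : ‖ρK • e0‖ ≤ ‖k₀ + ρK • e0‖ + ‖k₀‖ := by
      have := norm_add_le (k₀ + ρK • e0) (-k₀)
      simpa using this
    rw [norm_smul, Real.norm_eq_abs, abs_of_pos hρK0, he0, mul_one] at h2
    linarith
  have hρBRB : ρB ≤ RB := by
    set e0 : E2 := EuclideanSpace.single 0 (1:ℝ)
    have he0 : ‖e0‖ = 1 := by simp [e0, EuclideanSpace.norm_single]
    have hm : ρB • e0 ∈ B := hρBball (by
      simp [Metric.mem_closedBall, dist_zero_right, norm_smul, Real.norm_eq_abs,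
        abs_of_pos hρB0, he0])
    have h1 := hBR hm
    simp only [Metric.mem_closedBall, dist_zero_right] at h1
    rw [norm_smul, Real.norm_eq_abs, abs_of_pos hρB0, he0, mul_one] at h1
    exact h1
  set γ₀ : ℝ := min (ρK / (2 * RK)) (ρB / RB) with hγ₀
  have hγ₀0 : 0 < γ₀ := lt_min (by positivity) (by positivity)
  have hγ₀1 : γ₀ ≤ 1 := le_trans (min_le_left _ _) (by rw [div_le_one (by positivity)]; linarith)
  set Cm : ℝ := max (4 * RK / ρK) (2 / γ₀) with hCm
  have hCm0 : 0 < Cm := lt_of_lt_of_le (by positivity) (le_max_right _ _)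
  have hCm1 : 1 ≤ Cm := by
    have h1 : (2:ℝ) / γ₀ ≥ 2 := by
      rw [ge_iff_le, le_div_iff₀ hγ₀0]; nlinarith
    exact le_trans (by linarith) (le_max_right _ _)
  refine ⟨Cm * (1 + RB / ρB), fun x hx y hy => ?_⟩
  have hCpos : 0 < Cm * (1 + RB / ρB) := by positivity
  obtain ⟨hpxF, b1, hb1F, hxeq⟩ := hp x hx
  obtain ⟨hpyF, b2, hb2F, hyeq⟩ := hp y hy
  have hq1K : p x ∈ K := hKclosed.frontier_subset hpxF
  have hq2K : p y ∈ K := hKclosed.frontier_subset hpyF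
  have hb1B : b1 ∈ B := hBclosed.frontier_subset hb1F
  have hb2B : b2 ∈ B := hBclosed.frontier_subset hb2F
  set dx := bDist K B x with hdx
  set dy := bDist K B y with hdy
  have hdx0 : 0 < dx := bDist_pos hKc hk₀K hρB0 hρBball hRB0 hBR hx
  by_cases hq12 : p x = p y
  · rw [hq12, sub_self, norm_zero]
    positivity
  set y'' : E2 := p y + dx • b2 with hy''
  have hdy'' : bDist K B y'' = dx :=
    ray_dist hKc hKconv hBconv hk₀K hρB0 hρBball hRB0 hBR hy hq2K hb2B hyeq hdx0
  obtain ⟨u1, hu1n, hK1, hB1, hC1⟩ :=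
    support_exists hKconv hBconv hk₀i h0B hdx0 hq1K hb1B hxeq hdx.symm
  obtain ⟨u2, hu2n, hK2, hB2, hC2⟩ :=
    support_exists hKconv hBconv hk₀i h0B hdx0 hq2K hb2B hy'' hdy''
  have hQ1 : 0 ≤ (inner ℝ u1 (p x - p y) : ℝ) := by
    rw [inner_sub_right]; linarith [hK1 (p y) hq2K]
  have hQ2 : (inner ℝ u2 (p x - p y) : ℝ) ≤ 0 := by
    rw [inner_sub_right]; linarith [hK2 (p x) hq1K]
  have hβ1 : 0 ≤ (inner ℝ u1 (b1 - b2) : ℝ) := by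
    rw [inner_sub_right]; linarith [hB1 b2 hb2B]
  have hβ2 : (inner ℝ u2 (b1 - b2) : ℝ) ≤ 0 := by
    rw [inner_sub_right]; linarith [hB2 b1 hb1B]
  have hxy'' : x - y'' = (p x - p y) + dx • (b1 - b2) := by
    conv_lhs => rw [hxeq, hy'']
    module
  have hkey : ‖p x - p y‖ ≤ Cm * ‖x - y''‖ := by
    by_cases huu : u1 = u2
    · -- general relative position kills the B-term
      rw [huu] at hK1 hB1
      have h1a : 1 ≤ adim (suppSet K u2) :=
        one_le_adim ⟨hq1K, hK1⟩ ⟨hq2K, hK2⟩ hq12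
      have hB0' : adim (suppSet B u2) = 0 := by
        have := hgrp u2 hu2n; omega
      have hb12 : b1 = b2 := adim_eq_zero_imp hB0' ⟨hb1B, hB1⟩ ⟨hb2B, hB2⟩
      have : x - y'' = p x - p y := by rw [hxy'', hb12, sub_self, smul_zero, add_zero]
      rw [← this]
      nlinarith [norm_nonneg (x - y''), hCm1]
    · have hz1C : x ∈ K + dx • B := mem_KrB hq1K hb1B hxeq
      have hz2C : y'' ∈ K + dx • B := mem_KrB hq2K hb2B hy''
      rcases le_or_gt (‖u1 + u2‖ * (‖k₀‖ + (RK + dx * RB))) (ρK + dx * ρB) with hcase | hcase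
      · -- opposite-ish normals: the two points are far apart
        have hι0 : 0 < ρK + dx * ρB := by positivity
        have hball2 : Metric.closedBall k₀ (ρK + dx * ρB) ⊆ K + dx • B := by
          have hsub : Metric.closedBall 0 (dx * ρB) ⊆ dx • B := by
            intro w hw
            simp only [Metric.mem_closedBall, dist_zero_right] at hw
            refine ⟨dx⁻¹ • w, hρBball ?_, ?_⟩
            · simp only [Metric.mem_closedBall, dist_zero_right, norm_smul, Real.norm_eq_abs,
                abs_of_pos (inv_pos.2 hdx0)]
              have h9 : dx⁻¹ * ‖w‖ ≤ dx⁻¹ * (dx * ρB) :=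
                mul_le_mul_of_nonneg_left hw (inv_pos.2 hdx0).le
              have h10 : dx⁻¹ * (dx * ρB) = ρB := by field_simp
              linarith
            · show dx • dx⁻¹ • w = w
              rw [smul_inv_smul₀ (ne_of_gt hdx0)]
          have heq : Metric.closedBall k₀ ρK + Metric.closedBall (0:E2) (dx * ρB)
              = Metric.closedBall k₀ (ρK + dx * ρB) := by
            rw [_root_.closedBall_add_closedBall hρK0.le (by positivity)]
            simp
          rw [← heq]
          exact Set.add_subset_add hρKball hsub
        have hz2norm : ‖y''‖ ≤ RK + dx * RB := by
          rw [hy'']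
          calc ‖p y + dx • b2‖ ≤ ‖p y‖ + ‖dx • b2‖ := norm_add_le _ _
          _ ≤ RK + dx * RB := by
              have h1 := hKR hq2K
              simp only [Metric.mem_closedBall, dist_zero_right] at h1
              have h2 := hBR hb2B
              simp only [Metric.mem_closedBall, dist_zero_right] at h2
              rw [norm_smul, Real.norm_eq_abs, abs_of_pos hdx0]
              have := mul_le_mul_of_nonneg_left h2 hdx0.le
              linarith
        have hfar := caseB hu1n hu2n hz1C hz2C hC1 hC2 hball2 hι0 hz2norm
          (by positivity) hcase
        have hQle : ‖p x - p y‖ ≤ 2 * RK := by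
          have h1 := hKR hq1K
          have h2 := hKR hq2K
          simp only [Metric.mem_closedBall, dist_zero_right] at h1 h2
          calc ‖p x - p y‖ ≤ ‖p x‖ + ‖p y‖ := norm_sub_le _ _
          _ ≤ 2 * RK := by linarith
        have hxyl : ρK / 2 ≤ ‖x - y''‖ := by nlinarith [mul_pos hdx0 hρB0]
        have hCm4 : 4 * RK / ρK ≤ Cm := le_max_left _ _
        have hstep : (4 * RK / ρK) * (ρK / 2) = 2 * RK := by field_simp; ring
        calc ‖p x - p y‖ ≤ 2 * RK := hQle
        _ = (4 * RK / ρK) * (ρK / 2) := hstep.symm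
        _ ≤ (4 * RK / ρK) * ‖x - y''‖ :=
            mul_le_mul_of_nonneg_left hxyl (by positivity)
        _ ≤ Cm * ‖x - y''‖ := mul_le_mul_of_nonneg_right hCm4 (norm_nonneg _)
      · -- close normals: use the cone inequality
        have hD0 : 0 < ‖k₀‖ + (RK + dx * RB) := by positivity
        have hγs : γ₀ < ‖u1 + u2‖ := by
          have hg1 : γ₀ ≤ ρK / (2 * RK) := min_le_left _ _
          have hg2 : γ₀ ≤ ρB / RB := min_le_right _ _
          have hg1' : γ₀ * (2 * RK) ≤ ρK := by
            rw [← le_div_iff₀ (by positivity)]; exact hg1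
          have hg2' : γ₀ * RB ≤ ρB := by
            rw [← le_div_iff₀ hRB0]; exact hg2
          have hbound : γ₀ * (‖k₀‖ + (RK + dx * RB)) ≤ ρK + dx * ρB := by
            have h1 : γ₀ * (‖k₀‖ + (RK + dx * RB)) ≤ γ₀ * (2 * RK + dx * RB) := by
              apply mul_le_mul_of_nonneg_left _ hγ₀0.le
              linarith
            have h2 : γ₀ * (2 * RK + dx * RB) = γ₀ * (2 * RK) + dx * (γ₀ * RB) := by ring
            have h3 : dx * (γ₀ * RB) ≤ dx * ρB := mul_le_mul_of_nonneg_left hg2' hdx0.le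
            linarith
          by_contra hcon
          push_neg at hcon
          have := mul_le_mul_of_nonneg_right hcon hD0.le
          linarith
        have h5 := step5 hu1n hu2n huu hdx0.le hQ1 hQ2 hβ1 hβ2
        rw [← hxy''] at h5
        have hCmγ : 2 / γ₀ ≤ Cm := le_max_right _ _
        -- γ₀ * ‖Q‖ ≤ ‖u1+u2‖ * ‖Q‖ ≤ 2 ‖x - y''‖, so ‖Q‖ ≤ (2/γ₀) ‖x-y''‖ ≤ Cm ‖x-y''‖
        have h6 : γ₀ * ‖p x - p y‖ ≤ 2 * ‖x - y''‖ := by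
          nlinarith [norm_nonneg (p x - p y), hγs, h5]
        have h7 : ‖p x - p y‖ ≤ (2 / γ₀) * ‖x - y''‖ := by
          rw [div_mul_eq_mul_div, le_div_iff₀ hγ₀0]
          nlinarith [h6]
        calc ‖p x - p y‖ ≤ (2 / γ₀) * ‖x - y''‖ := h7
        _ ≤ Cm * ‖x - y''‖ := mul_le_mul_of_nonneg_right hCmγ (norm_nonneg _)
  -- finally, ‖x - y''‖ ≤ (1 + RB/ρB) ‖x - y‖
  have hyy'' : ‖y - y''‖ ≤ (RB / ρB) * ‖x - y‖ := by
    have heq : y - y'' = (dy - dx) • b2 := by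
      conv_lhs => rw [hyeq, hy'']
      module
    have hlip1 : dx ≤ dy + ‖x - y‖ / ρB :=
      bDist_lip hBconv hk₀K hρB0 hρBball x y
    have hlip2 : dy ≤ dx + ‖x - y‖ / ρB := by
      have := bDist_lip hBconv hk₀K hρB0 hρBball y x
      rw [norm_sub_rev] at this
      exact this
    have habs : |dy - dx| ≤ ‖x - y‖ / ρB := abs_le.mpr ⟨by linarith, by linarith⟩
    have hb2n : ‖b2‖ ≤ RB := by
      have := hBR hb2B
      simpa [Metric.mem_closedBall, dist_zero_right] using this
    rw [heq, norm_smul, Real.norm_eq_abs]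
    calc |dy - dx| * ‖b2‖ ≤ (‖x - y‖ / ρB) * RB := by
          apply mul_le_mul habs hb2n (norm_nonneg _) (by positivity)
    _ = (RB / ρB) * ‖x - y‖ := by ring
  have hfinal : ‖x - y''‖ ≤ (1 + RB / ρB) * ‖x - y‖ := by
    have h1 : x - y'' = (x - y) + (y - y'') := by abel
    calc ‖x - y''‖ = ‖(x - y) + (y - y'')‖ := by rw [h1]
    _ ≤ ‖x - y‖ + ‖y - y''‖ := norm_add_le _ _
    _ ≤ ‖x - y‖ + (RB / ρB) * ‖x - y‖ := by linarith [hyy'']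
    _ = (1 + RB / ρB) * ‖x - y‖ := by ring
  calc ‖p x - p y‖ ≤ Cm * ‖x - y''‖ := hkey
  _ ≤ Cm * ((1 + RB / ρB) * ‖x - y‖) := mul_le_mul_of_nonneg_left hfinal hCm0.le
  _ = Cm * (1 + RB / ρB) * ‖x - y‖ := by ring
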